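/- Let n ≥ 3, let 0 < ρ < R, and let Ω = {x ∈ ℝⁿ : ρ < |x| < R} be a concentric spherical annulus. Let H ∈ ℝ with H ≠ 0, and let u ∈ C²(Ω) ∩ C(closure Ω) be a radially symmetric solution of the constant mean curvature equation: u(x) = w(|x|) for some function w, div(∇u/√(1+|∇u|²)) = H in Ω, and u = 0 on ∂Ω. Then the critical set K = {x ∈ Ω : ∇u(x) = 0} is exactly one closed hypersurface, namely a sphere centered at the origin: there exists c ∈ (ρ, R) such that K = {x ∈ ℝⁿ : |x| = c}. -/

import Mathlib

open Set Metric

noncomputable section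

/-- The coefficients `a_{ij}(p) = (1+|p|²)^{-1/2}(δ_{ij} − pᵢpⱼ/(1+|p|²))`
of the mean curvature operator. -/
def mcCoeff {n : ℕ} (p : EuclideanSpace ℝ (Fin n)) (i j : Fin n) : ℝ :=
  (Real.sqrt (1 + ‖p‖ ^ 2))⁻¹ * ((if i = j then 1 else 0) - p i * p j / (1 + ‖p‖ ^ 2))

/-- Second partial derivative `∂²u/∂xᵢ∂xⱼ`. -/
def hessEntry {n : ℕ} (u : EuclideanSpace ℝ (Fin n) → ℝ) (x : EuclideanSpace ℝ (Fin n))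
    (i j : Fin n) : ℝ :=
  iteratedFDeriv ℝ 2 u x ![EuclideanSpace.single i 1, EuclideanSpace.single j 1]

/-- The Hessian matrix `D²u(x)`. -/
def hessMatrix {n : ℕ} (u : EuclideanSpace ℝ (Fin n) → ℝ) (x : EuclideanSpace ℝ (Fin n)) :
    Matrix (Fin n) (Fin n) ℝ :=
  Matrix.of fun i j => hessEntry u x i j

/-- The mean curvature operator `L u = div(∇u/√(1+|∇u|²)) = Σ a_{ij}(∇u) ∂²u/∂xᵢ∂xⱼ`. -/
def meanCurv {n : ℕ} (u : EuclideanSpace ℝ (Fin n) → ℝ) (x : EuclideanSpace ℝ (Fin n)) : ℝ :=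
  ∑ i, ∑ j, mcCoeff (gradient u x) i j * hessEntry u x i j

/-- A solution of the Dirichlet problem `L u = f(u)` in `Ω`, `u = 0` on `∂Ω`:
`u ∈ C²(Ω) ∩ C(closure Ω)`. -/
def IsMCSolution {n : ℕ} (Ω : Set (EuclideanSpace ℝ (Fin n))) (f : ℝ → ℝ)
    (u : EuclideanSpace ℝ (Fin n) → ℝ) : Prop :=
  ContDiffOn ℝ 2 u Ω ∧ ContinuousOn u (closure Ω) ∧
    (∀ x ∈ Ω, meanCurv u x = f (u x)) ∧ (∀ x ∈ frontier Ω, u x = 0)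

/-- Pure algebra: the double sum appearing in the mean curvature operator of a
radial function. -/
lemma annulus_sum_aux {n : ℕ} (x : Fin n → ℝ) (a b W : ℝ) (hW : W ≠ 0) :
    ∑ i, ∑ j, W⁻¹ * ((if i = j then (1:ℝ) else 0) - (2*a*x i) * (2*a*x j) / W^2)
        * (4*b*(x i)*(x j) + 2*a*(if i = j then 1 else 0))
    = W⁻¹ * ((4*b*(∑ k, (x k)^2) + 2*a*n)
        - 4*a^2/W^2 * (4*b*(∑ k, (x k)^2)^2 + 2*a*(∑ k, (x k)^2))) := by
  set S := ∑ k, (x k)^2 with hS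
  set K : ℝ := -(W⁻¹*(4*a^2/W^2)*(4*b)) with hK
  have h1 : ∀ i : Fin n, ∑ j, (W⁻¹ * ((if i = j then (1:ℝ) else 0) - (2*a*x i) * (2*a*x j) / W^2)
        * (4*b*(x i)*(x j) + 2*a*(if i = j then 1 else 0)))
      = K * (x i)^2 * S + (W⁻¹*(4*b*(x i)^2 + 2*a) - W⁻¹*(4*a^2*(x i)^2/W^2)*(2*a)) := by
    intro i
    have : ∀ j : Fin n, (W⁻¹ * ((if i = j then (1:ℝ) else 0) - (2*a*x i) * (2*a*x j) / W^2)
        * (4*b*(x i)*(x j) + 2*a*(if i = j then 1 else 0)))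
        = K * (x i)^2 * (x j)^2
          + (if i = j then (W⁻¹*(4*b*(x i)^2 + 2*a) - W⁻¹*(4*a^2*(x i)^2/W^2)*(2*a)) else 0) := by
      intro j
      by_cases h : i = j
      · subst h; simp only [if_pos rfl, hK, if_true]; field_simp; ring
      · simp only [if_neg h, hK]; field_simp; ring
    rw [Finset.sum_congr rfl (fun j _ => this j), Finset.sum_add_distrib, ← Finset.mul_sum, ← hS,
      Finset.sum_ite_eq Finset.univ i _, if_pos (Finset.mem_univ i)]
  rw [Finset.sum_congr rfl (fun i _ => h1 i), Finset.sum_add_distrib, Finset.sum_sub_distrib]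
  simp only [← Finset.sum_mul, ← Finset.mul_sum, ← hS]
  have h2 : ∑ i : Fin n, (4*b*(x i)^2 + 2*a) = 4*b*S + 2*a*n := by
    rw [Finset.sum_add_distrib, ← Finset.mul_sum, ← hS, Finset.sum_const, Finset.card_univ,
      Fintype.card_fin, nsmul_eq_mul]
    ring
  have h3 : ∑ i : Fin n, 4*a^2*(x i)^2/W^2 = 4*a^2*S/W^2 := by
    rw [← Finset.sum_div, ← Finset.mul_sum, ← hS]
  rw [h2, h3, hK, inv_eq_one_div]
  field_simp
  ring

/-- The ODE step: if the radial profile satisfies the radial form of the CMC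
equation at `r`, then `r ↦ rⁿ⁻¹ w'(r)/√(1+w'(r)²)` has derivative `H rⁿ⁻¹`. -/
lemma annulus_F_deriv (a b : ℝ → ℝ) (m : ℕ) (H r : ℝ)
    (hA : HasDerivAt (fun s : ℝ => a (s^2)) (b (r^2) * (2*r)) r)
    (hpde : (Real.sqrt (1 + 4*(a (r^2))^2*r^2))⁻¹ * ((4*(b (r^2))*r^2 + 2*(a (r^2))*((m:ℝ)+1))
       - 4*(a (r^2))^2/(Real.sqrt (1+4*(a (r^2))^2*r^2))^2
         * (4*(b (r^2))*(r^2)^2 + 2*(a (r^2))*r^2)) = H) :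
    HasDerivAt (fun s : ℝ => 2 * a (s^2) * s^(m+1) / Real.sqrt (1 + 4*(a (s^2))^2*s^2))
      (H * r^m) r := by
  have hpos : (0:ℝ) < 1 + 4*(a (r^2))^2*r^2 := by positivity
  have hW : 0 < Real.sqrt (1 + 4*(a (r^2))^2*r^2) := Real.sqrt_pos.2 hpos
  have hN : HasDerivAt (fun s : ℝ => 2 * a (s^2) * s^(m+1))
      ((2*(b (r^2)*(2*r)))*r^(m+1) + (2*a (r^2))*(((m:ℝ)+1)*r^m)) r := by
    have := (hA.const_mul 2).mul (hasDerivAt_pow (m+1) r)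
    simpa [Pi.mul_def] using this
  have hInner : HasDerivAt (fun s : ℝ => 1 + 4*(a (s^2))^2*s^2)
      ((4*(2*(a (r^2))*(b (r^2)*(2*r))))*r^2 + (4*(a (r^2))^2)*(2*r)) r := by
    have h1 := ((hA.pow 2).const_mul 4).mul (hasDerivAt_pow 2 r)
    have h2 := h1.const_add 1
    simpa [mul_comm, mul_assoc, mul_left_comm] using h2
  have hsq : Real.sqrt (1+4*(a (r^2))^2*r^2) ^ 2 = 1+4*(a (r^2))^2*r^2 :=
    Real.sq_sqrt (le_of_lt hpos)
  set W := Real.sqrt (1+4*(a (r^2))^2*r^2) with hWdef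
  have hD := (Real.hasDerivAt_sqrt (ne_of_gt hpos)).comp r hInner
  have hF := hN.div hD (ne_of_gt hW)
  refine hF.congr_deriv ?_
  simp only [Function.comp_apply]
  rw [← hWdef, ← hpde]
  field_simp
  ring

/-- Hessian entries of a radial function. -/
lemma annulus_hess_aux {n : ℕ} (u : EuclideanSpace ℝ (Fin n) → ℝ) (a b : ℝ → ℝ)
    (x : EuclideanSpace ℝ (Fin n)) (Ω : Set (EuclideanSpace ℝ (Fin n))) (hΩo : IsOpen Ω)
    (hx : x ∈ Ω)
    (hΨ : HasFDerivAt (fderiv ℝ u) (fderiv ℝ (fderiv ℝ u) x) x)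
    (hfe : ∀ y ∈ Ω, fderiv ℝ u y = (a (‖y‖^2)) • ((2:ℕ) • innerSL ℝ y))
    (hab : HasDerivAt a (b (‖x‖^2)) (‖x‖^2))
    (i j : Fin n) :
    hessEntry u x i j = 4 * b (‖x‖^2) * (x i) * (x j)
      + 2 * a (‖x‖^2) * (if i = j then 1 else 0) := by
  have key : HasFDerivAt (fun y => fderiv ℝ u y (EuclideanSpace.single j 1))
      ((fderiv ℝ (fderiv ℝ u) x).flip (EuclideanSpace.single j 1)) x := by
    have h := hΨ.clm_apply (hasFDerivAt_const (EuclideanSpace.single j (1:ℝ)) x)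
    simpa using h
  set C : EuclideanSpace ℝ (Fin n) →L[ℝ] ℝ :=
    (2:ℕ) • (innerSL ℝ (EuclideanSpace.single j (1:ℝ))) with hC
  have hG : HasFDerivAt
      (fun y : EuclideanSpace ℝ (Fin n) => a (‖y‖^2) * ((2:ℕ) • innerSL ℝ y (EuclideanSpace.single j 1)))
      ((a (‖x‖^2)) • C
        + (((2:ℕ) • innerSL ℝ x) (EuclideanSpace.single j 1)) • ((b (‖x‖^2)) • ((2:ℕ) • innerSL ℝ x))) x := by
    have h1 : HasFDerivAt (fun y : EuclideanSpace ℝ (Fin n) => a (‖y‖^2))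
        ((b (‖x‖^2)) • ((2:ℕ) • innerSL ℝ x)) x :=
      hab.comp_hasFDerivAt x (by simpa using (hasFDerivAt_id x).norm_sq)
    have h2 : HasFDerivAt
        (fun y : EuclideanSpace ℝ (Fin n) => ((2:ℕ) • innerSL ℝ y) (EuclideanSpace.single j 1)) C x := by
      refine C.hasFDerivAt.congr_of_eventuallyEq (Filter.Eventually.of_forall fun y => ?_)
      simp [hC, real_inner_comm]
    exact h1.mul h2
  have heq : (fun y => fderiv ℝ u y (EuclideanSpace.single j 1))
      =ᶠ[nhds x] (fun y : EuclideanSpace ℝ (Fin n) =>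
        a (‖y‖^2) * ((2:ℕ) • innerSL ℝ y (EuclideanSpace.single j 1))) := by
    filter_upwards [hΩo.mem_nhds hx] with y hy
    rw [hfe y hy]; simp
  have huniq := (key.congr_of_eventuallyEq heq.symm).unique hG
  have hh : hessEntry u x i j
      = (fderiv ℝ (fderiv ℝ u) x).flip (EuclideanSpace.single j 1) (EuclideanSpace.single i 1) := by
    rw [hessEntry, iteratedFDeriv_two_apply]
    simp
  rw [hh, huniq]
  simp [hC, EuclideanSpace.inner_single_left, EuclideanSpace.inner_single_right,
    EuclideanSpace.single_apply, real_inner_comm]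
  by_cases h : i = j
  · subst h; simp; ring
  · simp [h, Ne.symm h]; ring

set_option maxHeartbeats 1600000 in
/-- In a concentric spherical annulus of `ℝⁿ` (`n ≥ 3`), the critical set
of a radially symmetric solution of the constant mean curvature equation `L u = H`
(`H ≠ 0`) with zero Dirichlet data is exactly one sphere centered at the origin. -/
theorem critical_set_concentric_annulus
    (n : ℕ) (hn : 3 ≤ n) (ρ R : ℝ) (hρ : 0 < ρ) (hρR : ρ < R)
    (Ω : Set (EuclideanSpace ℝ (Fin n)))
    (hΩ : Ω = {x : EuclideanSpace ℝ (Fin n) | ρ < ‖x‖ ∧ ‖x‖ < R})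
    (H : ℝ) (hH : H ≠ 0)
    (u : EuclideanSpace ℝ (Fin n) → ℝ)
    (huC2 : ContDiffOn ℝ 2 u Ω) (huC : ContinuousOn u (closure Ω))
    (w : ℝ → ℝ) (hrad : ∀ x ∈ closure Ω, u x = w ‖x‖)
    (hu : ∀ x ∈ Ω, meanCurv u x = H)
    (hbdry : ∀ x ∈ frontier Ω, u x = 0) :
    ∃ c ∈ Set.Ioo ρ R,
      {x | x ∈ Ω ∧ gradient u x = 0} = {x : EuclideanSpace ℝ (Fin n) | ‖x‖ = c} := by
  obtain ⟨m, rfl⟩ : ∃ m, n = m + 1 := ⟨n - 1, by omega⟩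
  have hR : (0:ℝ) < R := lt_trans hρ hρR
  -- basic topology of the annulus
  have hΩo : IsOpen Ω := by
    have h : Ω = (fun x : EuclideanSpace ℝ (Fin (m+1)) => ‖x‖) ⁻¹' (Set.Ioo ρ R) := by
      rw [hΩ]; ext x; simp [Set.mem_Ioo]
    rw [h]; exact isOpen_Ioo.preimage continuous_norm
  have hΩmem : ∀ x : EuclideanSpace ℝ (Fin (m+1)), x ∈ Ω ↔ ρ < ‖x‖ ∧ ‖x‖ < R := fun x => by rw [hΩ]; exact Iff.rfl
  have hclos : closure Ω = {x : EuclideanSpace ℝ (Fin (m+1)) | ρ ≤ ‖x‖ ∧ ‖x‖ ≤ R} := by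
    apply Subset.antisymm
    · have h : IsClosed {x : EuclideanSpace ℝ (Fin (m+1)) | ρ ≤ ‖x‖ ∧ ‖x‖ ≤ R} := by
        have : {x : EuclideanSpace ℝ (Fin (m+1)) | ρ ≤ ‖x‖ ∧ ‖x‖ ≤ R} = (fun x : EuclideanSpace ℝ (Fin (m+1)) => ‖x‖) ⁻¹' (Set.Icc ρ R) := by
          ext x; simp [Set.mem_Icc]
        rw [this]; exact isClosed_Icc.preimage continuous_norm
      exact closure_minimal (by rw [hΩ]; exact fun x hx => ⟨hx.1.le, hx.2.le⟩) h
    · intro x hx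
      obtain ⟨hx1, hx2⟩ := hx
      have hx0 : (0:ℝ) < ‖x‖ := lt_of_lt_of_le hρ hx1
      set c : ℝ := (ρ + R)/2 with hc
      have hcρ : ρ < c := by rw [hc]; linarith
      have hcR : c < R := by rw [hc]; linarith
      refine mem_closure_of_tendsto (f := fun k : ℕ => (1 + (c/‖x‖ - 1) * (1/((k:ℝ)+1))) • x)
        (b := Filter.atTop) ?_ ?_
      · have h1 : Filter.Tendsto (fun k : ℕ => 1 + (c/‖x‖ - 1) * (1/((k:ℝ)+1)))
            Filter.atTop (nhds 1) := by
          have := tendsto_one_div_add_atTop_nhds_zero_nat (𝕜 := ℝ)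
          have h2 := (this.const_mul (c/‖x‖ - 1)).const_add 1
          simpa using h2
        have h3 := h1.smul_const x
        simpa using h3
      · refine Filter.Eventually.of_forall fun k => ?_
        rw [hΩmem]
        set t : ℝ := 1/((k:ℝ)+1) with ht
        have ht0 : 0 < t := by rw [ht]; positivity
        have ht1 : t ≤ 1 := by
          rw [ht]
          rw [div_le_one (by positivity)]
          simp
        have hs : (1 + (c/‖x‖ - 1) * t) * ‖x‖ = (1-t) * ‖x‖ + t * c := by
          field_simp; ring
        have hspos : 0 < 1 + (c/‖x‖ - 1) * t := by
          have : 0 < (1-t) * ‖x‖ + t * c := by nlinarith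
          nlinarith
        have hnorm : ‖(1 + (c/‖x‖ - 1) * t) • x‖ = (1-t) * ‖x‖ + t * c := by
          rw [norm_smul, Real.norm_eq_abs, abs_of_pos hspos, hs]
        rw [hnorm]
        constructor
        · nlinarith
        · nlinarith
  have hfront : ∀ x : EuclideanSpace ℝ (Fin (m+1)), (‖x‖ = ρ ∨ ‖x‖ = R) → x ∈ frontier Ω := by
    intro x hx
    rw [frontier, hΩo.interior_eq, hclos]
    constructor
    · rcases hx with h | h
      · exact ⟨h.ge, h.le.trans hρR.le⟩
      · exact ⟨hρR.le.trans h.ge, h.le⟩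
    · rw [hΩmem]
      rcases hx with h | h <;> rw [h] <;> intro hcon
      · exact absurd hcon.1 (lt_irrefl ρ)
      · exact absurd hcon.2 (lt_irrefl R)
  -- the unit vector and radial slices
  set e₁ : EuclideanSpace ℝ (Fin (m+1)) := EuclideanSpace.single (0 : Fin (m+1)) (1:ℝ) with he₁def
  have he₁ : ‖e₁‖ = 1 := by simp [he₁def]
  have hnorm_smul : ∀ r : ℝ, 0 ≤ r → ‖r • e₁‖ = r := by
    intro r hr; rw [norm_smul, he₁, Real.norm_eq_abs, abs_of_nonneg hr, mul_one]
  have hsmul_mem : ∀ r : ℝ, ρ < r → r < R → r • e₁ ∈ Ω := by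
    intro r h1 h2
    rw [hΩmem, hnorm_smul r (le_of_lt (lt_trans hρ h1))]
    exact ⟨h1, h2⟩
  -- the radial profile (in the variable t = r²)
  set I : Set ℝ := Set.Ioo (ρ^2) (R^2) with hIdef
  have hIo : IsOpen I := isOpen_Ioo
  set v : ℝ → ℝ := fun t => u (Real.sqrt t • e₁) with hvdef
  have hsqrtI : ∀ t ∈ I, ρ < Real.sqrt t ∧ Real.sqrt t < R := by
    intro t ht
    obtain ⟨h1, h2⟩ := ht
    constructor
    · have := Real.sqrt_lt_sqrt (by positivity) h1
      rwa [Real.sqrt_sq hρ.le] at this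
    · have := Real.sqrt_lt_sqrt (le_of_lt (lt_trans (pow_pos hρ 2) h1)) h2
      rwa [Real.sqrt_sq hR.le] at this
  have hvC2 : ContDiffOn ℝ 2 v I := by
    refine huC2.comp ?_ ?_
    · refine ContDiffOn.smul (f := fun t => Real.sqrt t) (g := fun _ => e₁) ?_ contDiffOn_const
      intro t ht
      exact (Real.contDiffAt_sqrt (ne_of_gt (lt_trans (pow_pos hρ 2) ht.1))).contDiffWithinAt
    · intro t ht
      obtain ⟨h1, h2⟩ := hsqrtI t ht
      exact hsmul_mem _ h1 h2
  set a : ℝ → ℝ := deriv v with hadef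
  set b : ℝ → ℝ := deriv a with hbdef
  have hva : ∀ t ∈ I, HasDerivAt v (a t) t := by
    intro t ht
    exact ((hvC2.differentiableOn (by norm_num) t ht).differentiableAt (hIo.mem_nhds ht)).hasDerivAt
  have haC1 : ContDiffOn ℝ 1 a I := hvC2.deriv_of_isOpen hIo (by norm_num)
  have hab : ∀ t ∈ I, HasDerivAt a (b t) t := by
    intro t ht
    exact ((haC1.differentiableOn (by norm_num) t ht).differentiableAt (hIo.mem_nhds ht)).hasDerivAt
  -- u is v ∘ ‖·‖² on the closed annulus
  have hval : ∀ y ∈ closure Ω, u y = v (‖y‖^2) := by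
    intro y hy
    have hy' : ρ ≤ ‖y‖ ∧ ‖y‖ ≤ R := by rwa [hclos] at hy
    have hmem : ‖y‖ • e₁ ∈ closure Ω := by
      rw [hclos]
      constructor <;> rw [hnorm_smul _ (norm_nonneg y)]
      exacts [hy'.1, hy'.2]
    rw [hvdef]
    simp only [Real.sqrt_sq (norm_nonneg y)]
    rw [hrad _ hmem, hnorm_smul _ (norm_nonneg y), ← hrad y hy]
  have hTmem : ∀ x : EuclideanSpace ℝ (Fin (m+1)), x ∈ Ω → ‖x‖^2 ∈ I := by
    intro x hx
    rw [hΩmem] at hx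
    constructor
    · exact pow_lt_pow_left₀ hx.1 hρ.le (by norm_num)
    · exact pow_lt_pow_left₀ hx.2 (norm_nonneg x) (by norm_num)
  -- first derivative
  have hfd : ∀ x ∈ Ω, HasFDerivAt u ((a (‖x‖^2)) • ((2:ℕ) • innerSL ℝ x)) x := by
    intro x hx
    have h1 : HasFDerivAt (fun z : EuclideanSpace ℝ (Fin (m+1)) => v (‖z‖^2)) ((a (‖x‖^2)) • ((2:ℕ) • innerSL ℝ x)) x :=
      (hva _ (hTmem x hx)).comp_hasFDerivAt (f := fun z : EuclideanSpace ℝ (Fin (m+1)) => ‖z‖^2) x (by simpa using (hasFDerivAt_id x).norm_sq)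
    refine h1.congr_of_eventuallyEq ?_
    filter_upwards [hΩo.mem_nhds hx] with y hy
    exact hval y (subset_closure hy)
  have hfe : ∀ y ∈ Ω, fderiv ℝ u y = (a (‖y‖^2)) • ((2:ℕ) • innerSL ℝ y) := fun y hy =>
    (hfd y hy).fderiv
  have hgrad : ∀ x ∈ Ω, gradient u x = (2 * a (‖x‖^2)) • x := by
    intro x hx
    refine (hasGradientAt_iff_hasFDerivAt.mpr ?_).gradient
    have h : (InnerProductSpace.toDual ℝ (EuclideanSpace ℝ (Fin (m+1)))) ((2 * a (‖x‖^2)) • x)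
        = (a (‖x‖^2)) • ((2:ℕ) • innerSL ℝ x) := by
      ext y
      simp [InnerProductSpace.toDual_apply_apply, real_inner_smul_left]
      ring
    rw [h]
    exact hfd x hx
  -- second derivative
  have hΨ : ∀ x ∈ Ω, HasFDerivAt (fderiv ℝ u) (fderiv ℝ (fderiv ℝ u) x) x := by
    intro x hx
    have h1 : ContDiffOn ℝ 1 (fderiv ℝ u) Ω := huC2.fderiv_of_isOpen hΩo (by norm_num)
    exact ((h1.differentiableOn (by norm_num) x hx).differentiableAt (hΩo.mem_nhds hx)).hasFDerivAt
  have hhess : ∀ x ∈ Ω, ∀ i j, hessEntry u x i j = 4 * b (‖x‖^2) * (x i) * (x j)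
      + 2 * a (‖x‖^2) * (if i = j then 1 else 0) := by
    intro x hx i j
    exact annulus_hess_aux u a b x Ω hΩo hx (hΨ x hx) hfe (hab _ (hTmem x hx)) i j
  -- the mean curvature operator of u
  have hmc : ∀ x ∈ Ω,
      (Real.sqrt (1 + 4*(a (‖x‖^2))^2*(‖x‖^2)))⁻¹ * ((4*(b (‖x‖^2))*(‖x‖^2) + 2*(a (‖x‖^2))*((m:ℝ)+1))
       - 4*(a (‖x‖^2))^2/(1+4*(a (‖x‖^2))^2*(‖x‖^2))
         * (4*(b (‖x‖^2))*(‖x‖^2)^2 + 2*(a (‖x‖^2))*(‖x‖^2))) = H := by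
    intro x hx
    rw [← hu x hx]
    set T := ‖x‖^2 with hT
    have hTnn : 0 ≤ T := by positivity
    have hWpos : 0 < Real.sqrt (1 + 4*(a T)^2*T) := Real.sqrt_pos.2 (by positivity)
    have hsq : (Real.sqrt (1 + 4*(a T)^2*T))^2 = 1 + 4*(a T)^2*T :=
      Real.sq_sqrt (by positivity)
    have hsum : ∑ k, (x k)^2 = T := by
      rw [hT, EuclideanSpace.norm_eq, Real.sq_sqrt (by positivity)]
      simp [sq_abs]
    have hnp : ‖(2 * a T) • x‖^2 = 4*(a T)^2*T := by
      rw [norm_smul, mul_pow, Real.norm_eq_abs, sq_abs, hT]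
      ring
    have hsum_eq := annulus_sum_aux x (a T) (b T) (Real.sqrt (1 + 4*(a T)^2*T)) (ne_of_gt hWpos)
    rw [hsq, hsum] at hsum_eq
    have hmc2 : meanCurv u x = ∑ i, ∑ j,
        (Real.sqrt (1 + 4*(a T)^2*T))⁻¹ * ((if i = j then (1:ℝ) else 0)
          - (2*(a T)*x i) * (2*(a T)*x j) / (1 + 4*(a T)^2*T))
        * (4*(b T)*(x i)*(x j) + 2*(a T)*(if i = j then 1 else 0)) := by
      rw [meanCurv]
      refine Finset.sum_congr rfl fun i _ => Finset.sum_congr rfl fun j _ => ?_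
      rw [hgrad x hx, hhess x hx i j, mcCoeff, hnp]
      simp only [PiLp.smul_apply, smul_eq_mul]; rfl
    rw [hmc2, hsum_eq]
    push_cast
    ring
  -- the radial PDE
  have hpde : ∀ r ∈ Set.Ioo ρ R,
      (Real.sqrt (1 + 4*(a (r^2))^2*r^2))⁻¹ * ((4*(b (r^2))*r^2 + 2*(a (r^2))*((m:ℝ)+1))
       - 4*(a (r^2))^2/(Real.sqrt (1+4*(a (r^2))^2*r^2))^2
         * (4*(b (r^2))*(r^2)^2 + 2*(a (r^2))*r^2)) = H := by
    intro r hr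
    have hrpos : 0 < r := lt_trans hρ hr.1
    have hmem := hsmul_mem r hr.1 hr.2
    have h := hmc (r • e₁) hmem
    rw [hnorm_smul r hrpos.le] at h
    rw [Real.sq_sqrt (by positivity)]
    exact h
  -- derivative of a(s²)
  have hA : ∀ r ∈ Set.Ioo ρ R, HasDerivAt (fun s : ℝ => a (s^2)) (b (r^2) * (2*r)) r := by
    intro r hr
    have hrI : r^2 ∈ I := ⟨pow_lt_pow_left₀ hr.1 hρ.le (by norm_num),
      pow_lt_pow_left₀ hr.2 (le_of_lt (lt_trans hρ hr.1)) (by norm_num)⟩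
    have hpow : HasDerivAt (fun s : ℝ => s^2) (2*r) r := by simpa using hasDerivAt_pow 2 r
    have := HasDerivAt.comp (h := fun s : ℝ => s^2) r (hab _ hrI) hpow
    simpa [mul_comm, mul_assoc, Function.comp_def] using this
  -- the conserved quantity F
  set F : ℝ → ℝ := fun s => 2 * a (s^2) * s^(m+1) / Real.sqrt (1 + 4*(a (s^2))^2*s^2) with hFdef
  have hF : ∀ r ∈ Set.Ioo ρ R, HasDerivAt F (H * r^m) r := by
    intro r hr
    exact annulus_F_deriv a b m H r (hA r hr) (hpde r hr)
  set Φ : ℝ → ℝ := fun s => F s - H*s^(m+1)/((m:ℝ)+1) with hΦdef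
  have hΦ : ∀ r ∈ Set.Ioo ρ R, HasDerivAt Φ 0 r := by
    intro r hr
    have h1 := (hF r hr).sub (((hasDerivAt_pow (m+1) r).const_mul H).div_const ((m:ℝ)+1))
    have h2 : H * r^m - H * (((m:ℝ)+1) * r ^ (m + 1 - 1)) / ((m:ℝ)+1) = 0 := by
      simp only [Nat.add_sub_cancel]
      have : ((m:ℝ)+1) ≠ 0 := by positivity
      field_simp
      ring
    rw [← h2]
    exact h1.congr_deriv (by rw [Nat.cast_succ])
  have hconst : ∀ r₁ ∈ Set.Ioo ρ R, ∀ r₂ ∈ Set.Ioo ρ R, Φ r₁ = Φ r₂ := by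
    have key : ∀ r₁ ∈ Set.Ioo ρ R, ∀ r₂ ∈ Set.Ioo ρ R, r₁ < r₂ → Φ r₁ = Φ r₂ := by
      intro r₁ h₁ r₂ h₂ hlt
      have hsub : Set.Icc r₁ r₂ ⊆ Set.Ioo ρ R := fun s hs =>
        ⟨lt_of_lt_of_le h₁.1 hs.1, lt_of_le_of_lt hs.2 h₂.2⟩
      have hsub' : Set.Ioo r₁ r₂ ⊆ Set.Ioo ρ R := fun s hs => hsub ⟨hs.1.le, hs.2.le⟩
      have hcont : ContinuousOn Φ (Set.Icc r₁ r₂) := fun s hs =>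
        ((hΦ s (hsub hs)).continuousAt).continuousWithinAt
      obtain ⟨c, hc, hc0⟩ := exists_hasDerivAt_eq_slope Φ (fun _ => 0) hlt hcont
        (fun s hs => hΦ s (hsub' hs))
      have hne : r₂ - r₁ ≠ 0 := by linarith
      have h0 : Φ r₂ - Φ r₁ = 0 :=
        (div_eq_zero_iff.mp hc0.symm).resolve_right hne
      linarith
    intro r₁ h₁ r₂ h₂
    rcases lt_trichotomy r₁ r₂ with h | h | h
    · exact key r₁ h₁ r₂ h₂ h
    · rw [h]
    · exact (key r₂ h₂ r₁ h₁ h).symm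
  -- Rolle: the profile has a critical point
  have hubdry : ∀ r : ℝ, r = ρ ∨ r = R → v (r^2) = 0 := by
    intro r hr
    have hrpos : 0 ≤ r := by rcases hr with h | h <;> rw [h] <;> [exact hρ.le; exact hR.le]
    have h1 : v (r^2) = u (r • e₁) := by
      rw [hvdef]; simp [Real.sqrt_sq hrpos]
    rw [h1]
    refine hbdry _ (hfront _ ?_)
    rw [hnorm_smul r hrpos]
    exact hr.imp id id
  have hvcont : ContinuousOn (fun r : ℝ => v (r^2)) (Set.Icc ρ R) := by
    have hmap : Set.MapsTo (fun r : ℝ => r • e₁) (Set.Icc ρ R) (closure Ω) := by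
      intro r hr
      rw [hclos]
      constructor <;> rw [hnorm_smul r (le_trans hρ.le hr.1)]
      exacts [hr.1, hr.2]
    have h1 : ContinuousOn (fun r : ℝ => u (r • e₁)) (Set.Icc ρ R) :=
      huC.comp ((continuous_id.smul continuous_const).continuousOn) hmap
    refine h1.congr fun r hr => ?_
    rw [hvdef]; simp [Real.sqrt_sq (le_trans hρ.le hr.1)]
  have hvderiv : ∀ r ∈ Set.Ioo ρ R, HasDerivAt (fun s : ℝ => v (s^2)) (a (r^2) * (2*r)) r := by
    intro r hr
    have hrI : r^2 ∈ I := ⟨pow_lt_pow_left₀ hr.1 hρ.le (by norm_num),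
      pow_lt_pow_left₀ hr.2 (le_of_lt (lt_trans hρ hr.1)) (by norm_num)⟩
    have hpow : HasDerivAt (fun s : ℝ => s^2) (2*r) r := by simpa using hasDerivAt_pow 2 r
    have := HasDerivAt.comp (h := fun s : ℝ => s^2) r (hva _ hrI) hpow
    simpa [mul_comm, mul_assoc, Function.comp_def] using this
  obtain ⟨r₀, hr₀, hr₀0⟩ := exists_hasDerivAt_eq_zero hρR hvcont
    (by rw [hubdry ρ (Or.inl rfl), hubdry R (Or.inr rfl)]) hvderiv
  have hr₀pos : 0 < r₀ := lt_trans hρ hr₀.1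
  have ha0 : a (r₀^2) = 0 := by
    rcases mul_eq_zero.mp hr₀0 with h | h
    · exact h
    · exfalso; linarith
  have hF0 : F r₀ = 0 := by
    rw [hFdef]; simp [ha0]
  -- conclusion
  refine ⟨r₀, hr₀, ?_⟩
  ext x
  simp only [Set.mem_setOf_eq]
  constructor
  · rintro ⟨hxΩ, hg⟩
    have hxpos : 0 < ‖x‖ := lt_trans hρ ((hΩmem x).mp hxΩ).1
    have hxne : x ≠ 0 := fun h => by rw [h, norm_zero] at hxpos; exact lt_irrefl 0 hxpos
    have hax : a (‖x‖^2) = 0 := by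
      have h := hgrad x hxΩ
      rw [hg] at h
      rcases smul_eq_zero.mp h.symm with h1 | h1
      · linarith [h1]
      · exact absurd h1 hxne
    have hFx : F ‖x‖ = 0 := by
      rw [hFdef]; simp [hax]
    have hxIoo : ‖x‖ ∈ Set.Ioo ρ R := (hΩmem x).mp hxΩ
    have hc := hconst ‖x‖ hxIoo r₀ hr₀
    rw [hΦdef] at hc
    simp only [hFx, hF0] at hc
    have hm1 : ((m:ℝ)+1) ≠ 0 := by positivity
    field_simp at hc
    replace hc : (‖x‖ = r₀ ∨ H = 0) ∨ ((m:ℝ)+1) = 0 :=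
      Or.inl (Or.inl ((pow_left_inj₀ (norm_nonneg x) hr₀pos.le (Nat.succ_ne_zero m)).mp
        (mul_left_cancel₀ hH (by linarith : H * ‖x‖ ^ (m+1) = H * r₀ ^ (m+1)))))
    rcases hc with (h | h) | h
    · exact h
    · exact absurd h hH
    · exact absurd h hm1
  · intro hx
    have hxΩ : x ∈ Ω := by rw [hΩmem, hx]; exact ⟨hr₀.1, hr₀.2⟩
    refine ⟨hxΩ, ?_⟩
    rw [hgrad x hxΩ, hx, ha0]
    simp
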